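/- Let n, p be positive integers, let M ∈ ℂ^{n×n} be Hermitian, and let U ∈ ℂ^{n×p} have unit-norm rows (i.e., diag(U U^*) = 𝟏). Set S(U) := M − Re(ddiag(M U U^*)). Assume S(U)·U = 0 and that Re tr((Ů Ů^*)^* S(U)) ≥ 0 for every Ů ∈ ℂ^{n×p} with diag(U Ů^* + Ů U^*) = 0. Then for every z ∈ ℂⁿ: Re tr([(2p − 2)·z z^* + Re(D_z^* U U^* D_z) ∘ (U U^*)]^* S(U)) ≥ 0, where D_z := diag(z). -/
import Mathlib


open Matrix Filter Finset
open scoped Classical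

noncomputable section

/-- Entrywise real part of a complex square matrix (as a complex matrix). -/
def reMat {n : ℕ} (A : Matrix (Fin n) (Fin n) ℂ) : Matrix (Fin n) (Fin n) ℂ :=
  Matrix.of fun i j => ((A i j).re : ℂ)

/-- `ddiag A` keeps the diagonal of `A`, setting off-diagonal entries to zero. -/
def ddiagC {n : ℕ} (A : Matrix (Fin n) (Fin n) ℂ) : Matrix (Fin n) (Fin n) ℂ :=
  Matrix.diagonal fun i => A i i

/-- Real trace pairing `⟨S, Q⟩ = Re tr(Q^* S)` of complex square matrices. -/
def cmip {n : ℕ} (S Q : Matrix (Fin n) (Fin n) ℂ) : ℝ := ((Qᴴ * S).trace).re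

/-- The tangent directions used in the proof: for a scalar `c` and a column index `α`,
`(Ud U z c α) i β = z i * c * δ_{βα} - Re(z i * c * conj (U i α)) * U i β`. -/
def Ud {n p : ℕ} (U : Matrix (Fin n) (Fin p) ℂ) (z : Fin n → ℂ) (c : ℂ) (α : Fin p) :
    Matrix (Fin n) (Fin p) ℂ :=
  Matrix.of fun i β =>
    z i * c * (if β = α then 1 else 0) - (((z i * c * star (U i α)).re : ℝ) : ℂ) * U i β

/-- The two scalars `1` and `I` indexing a real orthonormal basis direction. -/
def cb : Bool → ℂ := fun b => if b then Complex.I else 1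

lemma cmip_sum {n : ℕ} (S : Matrix (Fin n) (Fin n) ℂ) {ι : Type*} (s : Finset ι)
    (Q : ι → Matrix (Fin n) (Fin n) ℂ) :
    cmip S (∑ x ∈ s, Q x) = ∑ x ∈ s, cmip S (Q x) := by
  simp only [cmip, Matrix.conjTranspose_sum, Finset.sum_mul, Matrix.trace_sum, Complex.re_sum]

lemma Ud_tangent {n p : ℕ} (U : Matrix (Fin n) (Fin p) ℂ)
    (hU : ∀ i, (U * Uᴴ) i i = 1) (z : Fin n → ℂ) (c : ℂ) (α : Fin p) (i : Fin n) :
    (U * (Ud U z c α)ᴴ + Ud U z c α * Uᴴ) i i = 0 := by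
  have hUi : ∑ β, U i β * star (U i β) = 1 := by
    simpa [Matrix.mul_apply, Matrix.conjTranspose_apply] using hU i
  set r : ℂ := (((z i * c * star (U i α)).re : ℝ) : ℂ) with hr
  have hr' : r = (((z i * c * (starRingEnd ℂ) (U i α)).re : ℝ) : ℂ) := hr
  have e1 : ∀ β, U i β * star ((Ud U z c α) i β)
      = (if β = α then star (z i) * star c * U i α else 0) - r * (U i β * star (U i β)) := by
    intro β
    by_cases h : β = α <;>
      simp only [Ud, Matrix.of_apply, h, if_true, if_false, eq_self_iff_true, mul_one, mul_zero,
        zero_sub, star_sub, star_mul', star_one, star_neg, star_zero, Complex.star_def,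
        Complex.conj_ofReal] <;> rw [hr'] <;> ring
  have e2 : ∀ β, (Ud U z c α) i β * star (U i β)
      = (if β = α then z i * c * star (U i α) else 0) - r * (U i β * star (U i β)) := by
    intro β
    by_cases h : β = α <;>
      simp only [Ud, Matrix.of_apply, h, if_true, if_false, eq_self_iff_true, mul_one, mul_zero,
        zero_sub] <;> rw [hr'] <;>
      simp only [Complex.star_def] <;> ring
  have s1 : (U * (Ud U z c α)ᴴ) i i = star (z i) * star c * U i α - r := by
    simp only [Matrix.mul_apply, Matrix.conjTranspose_apply]
    rw [Finset.sum_congr rfl (fun β _ => e1 β), Finset.sum_sub_distrib,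
      Finset.sum_ite_eq', ← Finset.mul_sum, hUi]
    simp
  have s2 : (Ud U z c α * Uᴴ) i i = z i * c * star (U i α) - r := by
    simp only [Matrix.mul_apply, Matrix.conjTranspose_apply]
    rw [Finset.sum_congr rfl (fun β _ => e2 β), Finset.sum_sub_distrib,
      Finset.sum_ite_eq', ← Finset.mul_sum, hUi]
    simp
  rw [Matrix.add_apply, s1, s2]
  have hadd := Complex.add_conj (z i * c * star (U i α))
  have hst : (starRingEnd ℂ) (z i * c * star (U i α)) = star (z i) * star c * U i α := by
    simp only [← Complex.star_def, star_mul', star_star]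
  rw [hst] at hadd
  push_cast at hadd
  rw [hr]
  linear_combination hadd

lemma Ud_inner {n p : ℕ} (U : Matrix (Fin n) (Fin p) ℂ) (z : Fin n → ℂ) (c : ℂ) (α : Fin p)
    (i j : Fin n) :
    (Ud U z c α * (Ud U z c α)ᴴ) i j
      = z i * star (z j) * (c * star c)
        - (((z j * c * star (U j α)).re : ℝ) : ℂ) * (z i * c) * star (U j α)
        - (((z i * c * star (U i α)).re : ℝ) : ℂ) * (star (z j) * star c) * U i α
        + (((z i * c * star (U i α)).re : ℝ) : ℂ) * (((z j * c * star (U j α)).re : ℝ) : ℂ)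
            * (U * Uᴴ) i j := by
  have key : ∀ β, (Ud U z c α) i β * star ((Ud U z c α) j β)
      = (((z i * c * star (U i α)).re : ℝ) : ℂ) * (((z j * c * star (U j α)).re : ℝ) : ℂ)
          * (U i β * star (U j β))
        + (if β = α then
            (z i * star (z j) * (c * star c)
              - (((z j * c * star (U j α)).re : ℝ) : ℂ) * (z i * c) * star (U j α)
              - (((z i * c * star (U i α)).re : ℝ) : ℂ) * (star (z j) * star c) * U i α)
          else 0) := by
    intro β
    by_cases h : β = α <;>
      simp only [Ud, Matrix.of_apply, h, if_true, if_false, eq_self_iff_true, mul_one, mul_zero,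
        zero_sub, star_sub, star_mul', star_one, star_neg, star_zero, add_zero,
        Complex.star_def, Complex.conj_ofReal] <;> ring
  have hG : ∑ β, U i β * star (U j β) = (U * Uᴴ) i j := by
    simp [Matrix.mul_apply, Matrix.conjTranspose_apply]
  calc (Ud U z c α * (Ud U z c α)ᴴ) i j
      = ∑ β, (Ud U z c α) i β * star ((Ud U z c α) j β) := by
        simp [Matrix.mul_apply, Matrix.conjTranspose_apply]
    _ = _ := by
        rw [Finset.sum_congr rfl (fun β _ => key β), Finset.sum_add_distrib,
          ← Finset.mul_sum, hG, Finset.sum_ite_eq']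
        simp only [Finset.mem_univ, if_true]
        ring

lemma Ud_sum {n p : ℕ} (U : Matrix (Fin n) (Fin p) ℂ)
    (hU : ∀ i, (U * Uᴴ) i i = 1) (z : Fin n → ℂ) :
    ∑ α : Fin p, ∑ b : Bool, (Ud U z (cb b) α * (Ud U z (cb b) α)ᴴ)
      = (2 * (p:ℝ) - 2) • Matrix.vecMulVec z (star z)
          + Matrix.hadamard
              (reMat ((Matrix.diagonal z)ᴴ * (U * Uᴴ) * Matrix.diagonal z))
              (U * Uᴴ) := by
  ext i j
  have hb : ∀ α : Fin p,
      (∑ b : Bool, (Ud U z (cb b) α * (Ud U z (cb b) α)ᴴ)) i j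
        = 2 * (z i * star (z j))
          - z i * star (z j) * (U j α * star (U j α))
          - z i * star (z j) * (U i α * star (U i α))
          + (((z i * star (z j) * star (U i α) * U j α).re : ℝ) : ℂ) * (U * Uᴴ) i j := by
    intro α
    rw [show (∑ b : Bool, (Ud U z (cb b) α * (Ud U z (cb b) α)ᴴ)) i j
        = (Ud U z (cb true) α * (Ud U z (cb true) α)ᴴ) i j
          + (Ud U z (cb false) α * (Ud U z (cb false) α)ᴴ) i j from by
      rw [Fintype.sum_bool]; simp [Matrix.add_apply]]
    simp only [cb, if_true, if_false]
    rw [Ud_inner, Ud_inner]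
    apply Complex.ext <;>
      simp [Complex.mul_re, Complex.mul_im, Complex.add_re, Complex.add_im, Complex.sub_re,
        Complex.sub_im, Complex.star_def] <;> ring
  have hGj : ∑ α, U j α * star (U j α) = 1 := by
    simpa [Matrix.mul_apply, Matrix.conjTranspose_apply] using hU j
  have hGi : ∑ α, U i α * star (U i α) = 1 := by
    simpa [Matrix.mul_apply, Matrix.conjTranspose_apply] using hU i
  have hre : ∑ α, (((z i * star (z j) * star (U i α) * U j α).re : ℝ) : ℂ)
      = (((star (z i) * (U * Uᴴ) i j * z j).re : ℝ) : ℂ) := by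
    rw [← Complex.ofReal_sum, ← Complex.re_sum]
    congr 1
    have hstar : ∑ α, z i * star (z j) * star (U i α) * U j α
        = star (star (z i) * (U * Uᴴ) i j * z j) := by
      have h2' : star ((U * Uᴴ) i j) = ∑ α, star (U i α) * U j α := by
        simp [Matrix.mul_apply, Matrix.conjTranspose_apply, star_sum, star_mul']
      rw [star_mul', star_mul', star_star, h2', Finset.mul_sum, Finset.sum_mul]
      exact Finset.sum_congr rfl fun α _ => by ring
    rw [hstar]
    exact Complex.conj_re _
  rw [Matrix.sum_apply]
  rw [Finset.sum_congr rfl (fun α _ => hb α)]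
  trans ((p : ℂ) * (2 * (z i * star (z j)))
      - z i * star (z j) * (∑ α, U j α * star (U j α))
      - z i * star (z j) * (∑ α, U i α * star (U i α))
      + (∑ α, (((z i * star (z j) * star (U i α) * U j α).re : ℝ) : ℂ)) * (U * Uᴴ) i j)
  · rw [Finset.sum_add_distrib, Finset.sum_sub_distrib, Finset.sum_sub_distrib,
      Finset.mul_sum, Finset.mul_sum, Finset.sum_mul, Finset.sum_const, Finset.card_univ,
      Fintype.card_fin, nsmul_eq_mul]
  · rw [hGj, hGi, hre]
    simp only [Matrix.add_apply, Matrix.smul_apply, Matrix.vecMulVec_apply,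
      Matrix.hadamard_apply, reMat, Matrix.of_apply, Pi.star_apply,
      Matrix.diagonal_conjTranspose, Matrix.diagonal_mul, Matrix.mul_diagonal,
      Complex.real_smul]
    push_cast
    ring

/-- Second-order critical points `U` of `min Re tr((UU^*)^* M)` over the product
of unit spheres in `ℂ^p` satisfy the key inequality used in the PhaseCut
landscape analysis (complex case). -/
theorem stmt9 {n p : ℕ} (hn : 0 < n) (hp : 0 < p)
    (M : Matrix (Fin n) (Fin n) ℂ) (hM : M.IsHermitian)
    (U : Matrix (Fin n) (Fin p) ℂ) (hU : ∀ i, (U * Uᴴ) i i = 1)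
    (S : Matrix (Fin n) (Fin n) ℂ) (hS : S = M - reMat (ddiagC (M * (U * Uᴴ))))
    -- vanishing Riemannian gradient
    (h1 : S * U = 0)
    -- Riemannian Hessian PSD on the tangent space
    (h2 : ∀ Udot : Matrix (Fin n) (Fin p) ℂ,
      (∀ i, (U * Udotᴴ + Udot * Uᴴ) i i = 0) → 0 ≤ cmip S (Udot * Udotᴴ)) :
    ∀ z : Fin n → ℂ,
      0 ≤ cmip S ((2 * (p:ℝ) - 2) • Matrix.vecMulVec z (star z)
          + Matrix.hadamard
              (reMat ((Matrix.diagonal z)ᴴ * (U * Uᴴ) * Matrix.diagonal z))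
              (U * Uᴴ)) := by
  intro z
  rw [← Ud_sum U hU z]
  calc (0:ℝ)
      ≤ ∑ α : Fin p, ∑ b : Bool, cmip S (Ud U z (cb b) α * (Ud U z (cb b) α)ᴴ) :=
        Finset.sum_nonneg fun α _ => Finset.sum_nonneg fun b _ =>
          h2 _ (fun i => Ud_tangent U hU z (cb b) α i)
    _ = cmip S (∑ α : Fin p, ∑ b : Bool, (Ud U z (cb b) α * (Ud U z (cb b) α)ᴴ)) := by
        rw [cmip_sum]
        exact Finset.sum_congr rfl fun α _ => (cmip_sum S _ _).symm
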